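/- A basis B of a finite matroid M is a fundamental basis if and only if E(M) − B is a fundamental basis of the dual matroid M*. Consequently, the class of fundamental transversal matroids is closed under duality. -/

import Mathlib

open Matroid Set

variable {α : Type*}

/-- An element that lies in every base of `M`; a coloop. -/
def MCoPaper.Coloop (M : Matroid α) (e : α) : Prop := ∀ B, M.IsBase B → e ∈ B

/-- A circuit: a minimal dependent subset of the ground set. -/
def MCoPaper.Circuit (M : Matroid α) (C : Set α) : Prop :=
  C ⊆ M.E ∧ ¬ M.Indep C ∧ ∀ x ∈ C, M.Indep (C \ {x})

/-- A cyclic flat: a flat whose restriction has no coloops. -/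
def MCoPaper.CyclicFlat (M : Matroid α) (F : Set α) : Prop :=
  M.IsFlat F ∧ ∀ e ∈ F, ¬ MCoPaper.Coloop (M ↾ F) e

/-- The rank of a set: the largest cardinality of an independent subset. -/
noncomputable def MCoPaper.rk (M : Matroid α) (X : Set α) : ℕ :=
  sSup {n | ∃ I, M.Indep I ∧ I ⊆ X ∧ I.ncard = n}

open MCoPaper Classical in
/-- Mason's β function. -/
noncomputable def MCoPaper.beta [Fintype α] (M : Matroid α) (X : Finset α) : ℤ :=
  (rk M M.E : ℤ) - rk M ↑X -
    ∑ Y ∈ (Finset.univ.filter (fun Y : Finset α => CyclicFlat M ↑Y ∧ X ⊂ Y)).attach,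
      MCoPaper.beta M Y.1
  termination_by (Fintype.card α - X.card : ℕ)
  decreasing_by
    have hY := Y.2
    simp only [Finset.mem_filter, Finset.mem_univ, true_and] at hY
    have h1 : X.card < Y.1.card := Finset.card_lt_card hY.2
    have h2 : Y.1.card ≤ Fintype.card α := Y.1.card_le_univ
    omega

open MCoPaper Classical in
/-- Mason's α function. -/
noncomputable def MCoPaper.alpha [Fintype α] (M : Matroid α) (X : Finset α) : ℤ :=
  ((X.card : ℤ) - rk M ↑X) -
    ∑ F ∈ (Finset.univ.filter (fun F : Finset α => M.IsFlat ↑F ∧ F ⊂ X)).attach,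
      MCoPaper.alpha M F.1
  termination_by X.card
  decreasing_by
    have hF := F.2
    simp only [Finset.mem_filter, Finset.mem_univ, true_and] at hF
    exact Finset.card_lt_card hF.2

/-- `A : Fin n → Set α` is a presentation of `M`. -/
def MCoPaper.IsPresentation (M : Matroid α) {n : ℕ} (A : Fin n → Set α) : Prop :=
  (∀ i, A i ⊆ M.E) ∧
    ∀ I : Set α, M.Indep I ↔ ∃ φ : α → Fin n, Set.InjOn φ I ∧ ∀ x ∈ I, x ∈ A (φ x)

/-- `M` is a transversal matroid. -/
def MCoPaper.Transversal (M : Matroid α) : Prop :=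
  ∃ (n : ℕ) (A : Fin n → Set α), MCoPaper.IsPresentation M A

/-- `B` is a fundamental basis of `M`. -/
def MCoPaper.FundBasis (M : Matroid α) (B : Set α) : Prop :=
  M.IsBase B ∧ ∀ F, MCoPaper.CyclicFlat M F → F ⊆ M.closure (B ∩ F)

/-- `M` is a fundamental transversal matroid. -/
def MCoPaper.FundTransversal (M : Matroid α) : Prop :=
  ∃ B, MCoPaper.FundBasis M B

namespace MCoPaper

variable {M : Matroid α} {X F B : Set α} {e : α}

lemma key_b (hX : X ⊆ M.E) (he : e ∈ M.E) (heX : e ∉ X) (hecl : e ∈ M.closure X) :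
    e ∉ M✶.closure (M.E \ insert e X) := by
  set S := M.E \ insert e X with hSdef
  have hSE : S ⊆ M.E := diff_subset
  obtain ⟨J, hJ⟩ := M✶.exists_isBasis S (by rw [dual_ground]; exact hSE)
  intro hmem
  rw [← hJ.closure_eq_closure] at hmem
  have hJS : J ⊆ S := hJ.subset
  have hJE : J ⊆ M.E := hJS.trans hSE
  have heJ : e ∉ J := fun h => (hJS h).2 (mem_insert _ _)
  have hdep : M✶.Dep (insert e J) := (hJ.indep.mem_closure_iff_of_notMem heJ).1 hmem
  obtain ⟨B0, hB0, hdisj⟩ := (dual_indep_iff_exists hJE).1 hJ.indep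
  have hB0sub : B0 ⊆ M.E \ J :=
    subset_diff.2 ⟨hB0.subset_ground, hdisj.symm⟩
  have hclEJ : M.closure (M.E \ J) = M.E := by
    apply subset_antisymm (M.closure_subset_ground _)
    have h1 : M.closure B0 ⊆ M.closure (M.E \ J) := M.closure_subset_closure hB0sub
    rwa [hB0.closure_eq] at h1
  set T := M.E \ insert e J with hTdef
  have hXT : X ⊆ T := fun x hx => ⟨hX hx, by
    rintro (rfl | hxJ)
    · exact heX hx
    · exact (hJS hxJ).2 (mem_insert_of_mem _ hx)⟩
  have heT : e ∈ M.closure T := M.closure_subset_closure hXT hecl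
  have hins : insert e T = M.E \ J := by
    ext x
    simp only [hTdef, mem_insert_iff, mem_diff]
    constructor
    · rintro (rfl | ⟨hxE, hx⟩)
      · exact ⟨he, heJ⟩
      · exact ⟨hxE, fun hxJ => hx (mem_insert_of_mem _ hxJ)⟩
    · rintro ⟨hxE, hxJ⟩
      by_cases hxe : x = e
      · exact Or.inl hxe
      · exact Or.inr ⟨hxE, by rintro (rfl | h) <;> [exact hxe rfl; exact hxJ h]⟩
  have hclT : M.closure T = M.E := by
    rw [← closure_insert_eq_of_mem_closure heT, hins, hclEJ]
  have hTspan : M.Spanning T := by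
    rw [spanning_iff_closure_eq diff_subset]; exact hclT
  obtain ⟨B1, hB1, hB1T⟩ := hTspan.exists_isBase_subset
  have : M✶.Indep (insert e J) := by
    rw [dual_indep_iff_exists (insert_subset he hJE)]
    refine ⟨B1, hB1, disjoint_left.2 fun x hx hxB1 => (hB1T hxB1).2 ?_⟩
    rcases hx with rfl | hxJ
    · exact mem_insert _ _
    · exact mem_insert_of_mem _ hxJ
  exact hdep.not_indep this

lemma strip [Fintype α] (M : Matroid α) :
    ∀ (n : ℕ) (D X : Set α) (e : α), D.ncard ≤ n → e ∉ D → Disjoint X D →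
      (∀ x ∈ D, x ∉ M.closure ((insert e (X ∪ D)) \ {x})) →
      e ∈ M.closure (X ∪ D) → e ∈ M.closure X := by
  intro n
  induction n with
  | zero =>
    intro D X e hcard _ _ _ hcl
    have : D = ∅ := by
      rw [← Set.ncard_eq_zero (Set.toFinite D)]; omega
    rwa [this, union_empty] at hcl
  | succ n ih =>
    intro D X e hcard heD hdisj hK hcl
    rcases D.eq_empty_or_nonempty with rfl | ⟨x, hx⟩
    · rwa [union_empty] at hcl
    have hxX : x ∉ X := fun h => (disjoint_left.1 hdisj h) hx
    have hxe : x ≠ e := fun h => heD (h ▸ hx)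
    have hUeq : X ∪ D = insert x (X ∪ D \ {x}) := by
      ext y; simp only [mem_union, mem_insert_iff, mem_diff, mem_singleton_iff]
      constructor
      · rintro (h | h)
        · exact Or.inr (Or.inl h)
        · by_cases hyx : y = x
          · exact Or.inl hyx
          · exact Or.inr (Or.inr ⟨h, hyx⟩)
      · rintro (rfl | (h | ⟨h, _⟩))
        · exact Or.inr hx
        · exact Or.inl h
        · exact Or.inr h
    by_cases h1 : e ∈ M.closure (X ∪ D \ {x})
    · refine ih (D \ {x}) X e ?_ (fun h => heD h.1) (hdisj.mono_right diff_subset)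
        (fun y hy hycl => hK y hy.1 (M.closure_subset_closure ?_ hycl)) h1
      · have := Set.ncard_diff_singleton_add_one hx (Set.toFinite D)
        omega
      · intro z hz
        rcases hz with ⟨hz1, hz2⟩
        rcases hz1 with rfl | hz1
        · exact ⟨mem_insert _ _, hz2⟩
        · rcases hz1 with hz1 | hz1
          · exact ⟨mem_insert_of_mem _ (Or.inl hz1), hz2⟩
          · exact ⟨mem_insert_of_mem _ (Or.inr hz1.1), hz2⟩
    · exfalso
      have hex : e ∈ M.closure (insert x (X ∪ D \ {x})) \ M.closure (X ∪ D \ {x}) :=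
        ⟨by rwa [← hUeq], h1⟩
      have hxcl : x ∈ M.closure (insert e (X ∪ D \ {x})) := (Matroid.closure_exchange hex).1
      refine hK x hx (M.closure_subset_closure ?_ hxcl)
      intro z hz
      rcases hz with rfl | (hz | ⟨hz, hzx⟩)
      · exact ⟨mem_insert _ _, fun h => hxe (mem_singleton_iff.1 h).symm⟩
      · exact ⟨mem_insert_of_mem _ (Or.inl hz), fun h => hxX ((mem_singleton_iff.1 h) ▸ hz)⟩
      · exact ⟨mem_insert_of_mem _ (Or.inr hz), fun h => hzx (mem_singleton_iff.1 h)⟩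

lemma key_a [Fintype α] (hX : X ⊆ M.E) (he : e ∈ M.E) (heX : e ∉ X)
    (hecl : e ∉ M✶.closure (M.E \ insert e X)) : e ∈ M.closure X := by
  set S := M.E \ insert e X with hSdef
  have hSE : S ⊆ M.E := diff_subset
  obtain ⟨J, hJ⟩ := M✶.exists_isBasis S (by rw [dual_ground]; exact hSE)
  rw [← hJ.closure_eq_closure] at hecl
  have hJS : J ⊆ S := hJ.subset
  have hJE : J ⊆ M.E := hJS.trans hSE
  have heS : e ∉ S := fun h => h.2 (mem_insert _ _)
  have hindep : M✶.Indep (insert e J) :=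
    ((hJ.indep.notMem_closure_iff (by rwa [dual_ground])).1 hecl).1
  obtain ⟨B0, hB0, hdisj⟩ := (dual_indep_iff_exists (insert_subset he hJE)).1 hindep
  have hB0sub : B0 ⊆ X ∪ (S \ J) := by
    intro x hxB
    have hxE : x ∈ M.E := hB0.subset_ground hxB
    have hxeJ : x ∉ insert e J := disjoint_right.1 hdisj hxB
    by_cases hxX : x ∈ X
    · exact Or.inl hxX
    · refine Or.inr ⟨⟨hxE, ?_⟩, fun h => hxeJ (mem_insert_of_mem _ h)⟩
      rintro (rfl | h)
      · exact hxeJ (mem_insert _ _)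
      · exact hxX h
  have hecl2 : e ∈ M.closure (X ∪ (S \ J)) := by
    have := hB0.closure_eq
    exact M.closure_subset_closure hB0sub (this ▸ he)
  refine strip M (S \ J).ncard (S \ J) X e le_rfl (fun h => heS h.1)
    (disjoint_left.2 fun x hxX hxS => hxS.1.2 (mem_insert_of_mem _ hxX)) ?_ hecl2
  intro x hxSJ
  have hxE : x ∈ M.E := hSE hxSJ.1
  have hxcl : x ∈ M✶.closure J := by
    rw [hJ.closure_eq_closure]
    exact M✶.subset_closure S (by rw [dual_ground]; exact hSE) hxSJ.1
  have hmaster : x ∉ M.closure (M.E \ insert x J) := by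
    have := key_b (M := M✶) (X := J) (e := x) (by rwa [dual_ground])
      (by rwa [dual_ground]) hxSJ.2 hxcl
    rwa [dual_dual, dual_ground] at this
  intro hxc
  refine hmaster (M.closure_subset_closure ?_ hxc)
  intro z hz
  rcases hz with ⟨hz1, hz2⟩
  have hze : z ≠ x := fun h => hz2 (h ▸ rfl)
  rcases hz1 with rfl | (hz1 | hz1)
  · refine ⟨he, ?_⟩
    rintro (rfl | h)
    · exact heS hxSJ.1
    · exact (hJS h).2 (mem_insert _ _)
  · refine ⟨hX hz1, ?_⟩
    rintro (rfl | h)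
    · exact hze rfl
    · exact (hJS h).2 (mem_insert_of_mem _ hz1)
  · refine ⟨hSE hz1.1, ?_⟩
    rintro (rfl | h)
    · exact hze rfl
    · exact hz1.2 h

lemma mem_closure_iff_dual [Fintype α] (hX : X ⊆ M.E) (he : e ∈ M.E) (heX : e ∉ X) :
    e ∈ M.closure X ↔ e ∉ M✶.closure (M.E \ insert e X) :=
  ⟨fun h => key_b hX he heX h, fun h => key_a hX he heX h⟩

lemma not_coloop_iff (hF : F ⊆ M.E) (he : e ∈ F) :
    ¬ MCoPaper.Coloop (M ↾ F) e ↔ e ∈ M.closure (F \ {e}) := by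
  constructor
  · intro h
    by_contra hcl
    refine h (fun B hB => ?_)
    rw [isBase_restrict_iff hF] at hB
    by_contra heB
    have hBsub : B ⊆ F \ {e} := subset_diff_singleton hB.subset heB
    exact hcl (M.closure_subset_closure hBsub (hB.subset_closure he))
  · intro hcl hcolo
    obtain ⟨I, hI⟩ := M.exists_isBasis (F \ {e}) (diff_subset.trans hF)
    have hIF : M.IsBasis I F := by
      rw [isBasis_iff_indep_closure]
      refine ⟨hI.indep, fun x hx => ?_, hI.subset.trans diff_subset⟩
      by_cases hxe : x = e
      · subst hxe; rwa [hI.closure_eq_closure]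
      · exact hI.subset_closure ⟨hx, hxe⟩
    have := hcolo I ((isBase_restrict_iff hF).2 hIF)
    exact (hI.subset this).2 rfl

lemma flat_of_closure_subset (hF : F ⊆ M.E) (h : M.closure F ⊆ F) : M.IsFlat F := by
  refine ⟨fun I X hIF hIX => ?_, hF⟩
  have h1 : X ⊆ M.closure I := hIX.subset_closure
  rw [hIF.closure_eq_closure] at h1
  exact h1.trans h

lemma cyclicFlat_dual [Fintype α] {M : Matroid α} {F : Set α} (hF : F ⊆ M.E) :
    CyclicFlat M F ↔ CyclicFlat M✶ (M.E \ F) := by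
  have hF'E : M.E \ F ⊆ M.E := diff_subset
  have hF'E' : M.E \ F ⊆ M✶.E := by rw [dual_ground]; exact diff_subset
  have hchar : ∀ (N : Matroid α) (G : Set α), G ⊆ N.E →
      ((∀ e ∈ G, ¬ Coloop (N ↾ G) e) ↔ ∀ e ∈ G, e ∈ N.closure (G \ {e})) :=
    fun N G hG => forall₂_congr fun e he => not_coloop_iff hG he
  have id1 : ∀ x, x ∉ F → (M.E \ F) \ {x} = M.E \ insert x F := by
    intro x hx
    ext y
    simp only [mem_diff, mem_singleton_iff, mem_insert_iff]
    tauto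
  have id2 : ∀ e ∈ F, M.E \ insert e (F \ {e}) = M.E \ F := by
    intro e he
    rw [Set.insert_diff_singleton, Set.insert_eq_self.2 he]
  have hPQ2 : M.IsFlat F ↔ ∀ x ∈ M.E \ F, x ∈ M✶.closure ((M.E \ F) \ {x}) := by
    constructor
    · intro hFlat x hx
      have hxncl : x ∉ M.closure F := by rw [hFlat.closure]; exact hx.2
      rw [id1 x hx.2]
      by_contra hc
      exact hxncl ((mem_closure_iff_dual hF hx.1 hx.2).2 hc)
    · intro hQ
      apply flat_of_closure_subset hF
      intro x hxcl
      have hxE : x ∈ M.E := M.closure_subset_ground _ hxcl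
      by_contra hxF
      have h3 := hQ x ⟨hxE, hxF⟩
      rw [id1 x hxF] at h3
      exact (mem_closure_iff_dual hF hxE hxF).1 hxcl h3
  have hPQ1 : (∀ e ∈ F, e ∈ M.closure (F \ {e})) ↔ M✶.IsFlat (M.E \ F) := by
    constructor
    · intro hP
      apply flat_of_closure_subset hF'E'
      intro x hxcl
      have hxE : x ∈ M.E := by
        have := M✶.closure_subset_ground _ hxcl
        rwa [dual_ground] at this
      refine ⟨hxE, fun hxF => ?_⟩
      have h1 := hP x hxF
      have h2 := key_b (X := F \ {x}) (diff_subset.trans hF) hxE (fun h => h.2 rfl) h1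
      rw [id2 x hxF] at h2
      exact h2 hxcl
    · intro hQ e he
      have heE := hF he
      apply (mem_closure_iff_dual (X := F \ {e}) (diff_subset.trans hF) heE (fun h => h.2 rfl)).2
      rw [id2 e he, hQ.closure]
      exact fun h => h.2 he
  constructor
  · rintro ⟨hFlat, hcyc⟩
    rw [hchar M F hF] at hcyc
    exact ⟨hPQ1.1 hcyc, (hchar M✶ (M.E \ F) hF'E').2 (hPQ2.1 hFlat)⟩
  · rintro ⟨hFlat', hcyc'⟩
    rw [hchar M✶ (M.E \ F) hF'E'] at hcyc'
    exact ⟨hPQ2.2 hcyc', (hchar M F hF).2 (hPQ1.2 hFlat')⟩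

lemma span_iff_dual_span {M : Matroid α} {B F : Set α} (hB : M.IsBase B) (hF : F ⊆ M.E) :
    F ⊆ M.closure (B ∩ F) ↔ (M.E \ F) ⊆ M✶.closure ((M.E \ B) ∩ (M.E \ F)) := by
  have h1 : F ⊆ M.closure (B ∩ F) ↔ M.IsBasis (B ∩ F) F := by
    constructor
    · intro h
      rw [isBasis_iff_indep_closure]
      exact ⟨hB.indep.subset inter_subset_left, h, inter_subset_right⟩
    · exact fun h => h.subset_closure
  have h2 : M.E \ F ⊆ M✶.closure ((M.E \ B) ∩ (M.E \ F)) ↔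
      M✶.IsBasis ((M.E \ B) ∩ (M.E \ F)) (M.E \ F) := by
    constructor
    · intro h
      rw [isBasis_iff_indep_closure]
      exact ⟨hB.compl_isBase_dual.indep.subset inter_subset_left, h, inter_subset_right⟩
    · exact fun h => h.subset_closure
  rw [h1, h2]
  exact hB.inter_isBasis_iff_compl_inter_isBasis_dual hF

end MCoPaper

open MCoPaper

theorem stmt18 [Fintype α] (M : Matroid α) :
    (∀ B, M.IsBase B → (FundBasis M B ↔ FundBasis M✶ (M.E \ B))) ∧
    (FundTransversal M ↔ FundTransversal M✶) := by
  have main : ∀ (N : Matroid α) (B : Set α), N.IsBase B → FundBasis N B →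
      FundBasis N✶ (N.E \ B) := by
    intro N B hB hFB
    refine ⟨hB.compl_isBase_dual, fun F' hF' => ?_⟩
    have hF'E : F' ⊆ N.E := by
      have := hF'.1.subset_ground; rwa [dual_ground] at this
    have hFE : N.E \ F' ⊆ N.E := diff_subset
    have hcf : CyclicFlat N (N.E \ F') := by
      rw [cyclicFlat_dual hFE, diff_diff_cancel_left hF'E]
      exact hF'
    have h2 := (span_iff_dual_span hB hFE).1 (hFB.2 _ hcf)
    rwa [diff_diff_cancel_left hF'E] at h2
  have part1 : ∀ B, M.IsBase B → (FundBasis M B ↔ FundBasis M✶ (M.E \ B)) := by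
    intro B hB
    constructor
    · exact main M B hB
    · intro h
      have := main M✶ (M.E \ B) hB.compl_isBase_dual h
      rwa [dual_dual, dual_ground, diff_diff_cancel_left hB.subset_ground] at this
  refine ⟨part1, ⟨?_, ?_⟩⟩
  · rintro ⟨B, hFB⟩
    exact ⟨M.E \ B, (part1 B hFB.1).1 hFB⟩
  · rintro ⟨B', hFB'⟩
    have hB' : M✶.IsBase B' := hFB'.1
    have hB'E : B' ⊆ M.E := by
      have := hB'.subset_ground; rwa [dual_ground] at this
    refine ⟨M.E \ B', (part1 _ hB'.compl_isBase_of_dual).2 ?_⟩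
    rwa [diff_diff_cancel_left hB'E]
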